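/- Let g : 𝕋 × ℝ → ℝ be a bounded continuous solution of the stationary equation v ∂_x g(x,v) = (1/κ)(F(x,v) − g(x,v)) for v > 0, where F is continuous and 𝕋 has length 1. Then for v > 0, g admits the representation g(x,v) = ∫_0^1 e^{-(1-y)/(κ v)} / (κ v (1 − e^{-1/(κ v)})) · F(x + y, v) dy. -/

import Mathlib

open MeasureTheory Real

/-- Periodic Duhamel representation formula: a bounded continuous 1-periodic (in `x`)
solution of `v ∂ₓ g = (1/κ)(F − g)` for `v > 0` satisfies
`g(x,v) = ∫_0^1 e^{-(1-y)/(κv)}/(κv(1 − e^{-1/(κv)})) F(x+y,v) dy`. -/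
theorem periodic_duhamel_representation (κ : ℝ) (hκ : 0 < κ) (g F : ℝ → ℝ → ℝ)
    (hgper : ∀ x v, g (x + 1) v = g x v)
    (hFper : ∀ x v, F (x + 1) v = F x v)
    (hgcont : Continuous fun p : ℝ × ℝ => g p.1 p.2)
    (hFcont : Continuous fun p : ℝ × ℝ => F p.1 p.2)
    (hgbdd : ∃ M : ℝ, ∀ x v, |g x v| ≤ M)
    -- the stationary equation for `v > 0`, i.e. `∂ₓ g = (1/(κv))(F − g)`:
    (heq : ∀ v : ℝ, 0 < v → ∀ x : ℝ,
      HasDerivAt (fun x => g x v) ((1 / (κ * v)) * (F x v - g x v)) x) :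
    ∀ v : ℝ, 0 < v → ∀ x : ℝ,
      g x v = ∫ y in (0 : ℝ)..1,
        Real.exp (-(1 - y) / (κ * v)) / (κ * v * (1 - Real.exp (-1 / (κ * v)))) *
          F (x + y) v := by
  intro v hv x
  have hκv : 0 < κ * v := mul_pos hκ hv
  set c : ℝ := 1 / (κ * v) with hc
  have hcpos : 0 < c := by positivity
  -- derivative of y ↦ exp(c y) g(x+y)
  have hder : ∀ y : ℝ, HasDerivAt (fun y => Real.exp (c * y) * g (x + y) v)
      (c * Real.exp (c * y) * F (x + y) v) y := by
    intro y
    have h1 : HasDerivAt (fun y => Real.exp (c * y)) (c * Real.exp (c * y)) y := by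
      simpa [mul_comm] using ((hasDerivAt_id y).const_mul c).exp
    have h2 : HasDerivAt (fun y => g (x + y) v) (c * (F (x + y) v - g (x + y) v)) y := by
      have := (heq v hv (x + y)).comp y ((hasDerivAt_id y).const_add x)
      simpa [hc, Function.comp_def] using this
    have := h1.fun_mul h2
    refine this.congr_deriv ?_
    ring
  have hFc : Continuous fun y : ℝ => c * Real.exp (c * y) * F (x + y) v := by
    have : Continuous fun y : ℝ => F (x + y) v :=
      hFcont.comp (by continuity : Continuous fun y : ℝ => ((x + y, v) : ℝ × ℝ))
    continuity
  have hint := intervalIntegral.integral_eq_sub_of_hasDerivAt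
    (f := fun y => Real.exp (c * y) * g (x + y) v)
    (fun y _ => hder y) (hFc.intervalIntegrable 0 1)
  have hper := hgper x v
  have hexpc1 : (1 : ℝ) < Real.exp c := by
    exact Real.one_lt_exp_iff.mpr hcpos
  have hec : Real.exp c - 1 ≠ 0 := by linarith
  have hg : g x v = (Real.exp c - 1)⁻¹ * ∫ y in (0:ℝ)..1,
      c * Real.exp (c * y) * F (x + y) v := by
    rw [hint]
    simp only [mul_one, mul_zero, Real.exp_zero, one_mul, hper]
    field_simp
    ring
  have hemc : Real.exp (-c) < 1 := by
    rw [Real.exp_lt_one_iff]; linarith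
  have key : ∀ y : ℝ,
      Real.exp (-(1 - y) / (κ * v)) / (κ * v * (1 - Real.exp (-1 / (κ * v)))) *
        F (x + y) v
      = (Real.exp c - 1)⁻¹ * (c * Real.exp (c * y) * F (x + y) v) := by
    intro y
    have e1 : -(1 - y) / (κ * v) = c * y + -c := by
      rw [hc]; field_simp; ring
    have e2 : -1 / (κ * v) = -c := by
      rw [hc]; field_simp
    rw [e1, e2, Real.exp_add]
    have h3 : 1 - Real.exp (-c) ≠ 0 := by linarith
    have h4 : Real.exp c * Real.exp (-c) = 1 := by
      rw [← Real.exp_add]; simp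
    have hcne : c ≠ 0 := ne_of_gt hcpos
    have hκvc : κ * v = 1 / c := by
      rw [hc]; field_simp
    rw [hκvc, Real.exp_neg]
    have h5 : Real.exp c ≠ 0 := (Real.exp_pos c).ne'
    field_simp
  rw [hg, intervalIntegral.integral_congr (fun y _ => key y),
    intervalIntegral.integral_const_mul]
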